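/- arXiv:0709.4072 — 2 statements merged into one kernel-verified Lean document; each statement's English description precedes it below -/
import Mathlib

section
/- Let F_0,…,F_q be homogeneous polynomials on ℂ^{r+1}. The q-form ω = i_R(dF_0 ∧ ⋯ ∧ dF_q) satisfies the Plücker decomposability condition: (i_v ω) ∧ ω = 0 for every v ∈ Λ^{q−1} ℂ^{r+1}. -/
open MvPolynomial

/-- Polynomial differential forms on `ℂ^n`: the value at a finite set `I` of
indices is the polynomial coefficient of `dx_I` (indices in increasing order). -/
abbrev PolyForm (n : ℕ) := Finset (Fin n) → MvPolynomial (Fin n) ℂ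

/-- `η` is a `q`-form if its coefficients vanish off index sets of cardinality `q`. -/
def PolyForm.IsForm {n : ℕ} (q : ℕ) (η : PolyForm n) : Prop :=
  ∀ I : Finset (Fin n), I.card ≠ q → η I = 0

/-- Exterior derivative of a polynomial differential form. -/
noncomputable def polyExtDeriv {n : ℕ} (η : PolyForm n) : PolyForm n :=
  fun J => ∑ j ∈ J,
    (-1 : MvPolynomial (Fin n) ℂ) ^ ((J.filter (· < j)).card) * pderiv j (η (J.erase j))

/-- Contraction (interior product) with the Euler vector field `R = Σ xᵢ ∂/∂xᵢ`. -/
noncomputable def contractR {n : ℕ} (η : PolyForm n) : PolyForm n :=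
  fun I => ∑ j ∈ Iᶜ,
    (-1 : MvPolynomial (Fin n) ℂ) ^ ((I.filter (· < j)).card) * X j * η (insert j I)

/-- Contraction with a constant vector field `v`. -/
noncomputable def contractVec {n : ℕ} (v : Fin n → ℂ) (η : PolyForm n) : PolyForm n :=
  fun I => ∑ j ∈ Iᶜ,
    (-1 : MvPolynomial (Fin n) ℂ) ^ ((I.filter (· < j)).card) * C (v j) * η (insert j I)

/-- Wedge product `α ∧ β` where `α` is a `p`-form. -/
noncomputable def wedgeForm {n : ℕ} (p : ℕ) (α β : PolyForm n) : PolyForm n :=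
  fun K => ∑ I ∈ K.powerset.filter (fun I => I.card = p),
    (-1 : MvPolynomial (Fin n) ℂ) ^ (∑ a ∈ I, ((K \ I).filter (· < a)).card)
      * α I * β (K \ I)

/-- The `(m)`-form `dF₀ ∧ ⋯ ∧ dF_{m-1}`, given by determinants of Jacobian minors. -/
noncomputable def dwedge {n m : ℕ} (F : Fin m → MvPolynomial (Fin n) ℂ) : PolyForm n :=
  fun K => if h : K.card = m then
      Matrix.det (Matrix.of fun i j : Fin m =>
        pderiv ((K.orderIsoOfFin h j : Fin n)) (F i))
    else 0


open Finset

lemma filter_univ_lt {k : ℕ} (b : Fin k) :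
    ((Finset.univ : Finset (Fin k)).filter (fun t => t < b)).card = b := by
  have : (Finset.univ : Finset (Fin k)).filter (fun t => t < b) = Finset.Iio b := by
    ext t; simp
  rw [this, Fin.card_Iio]

lemma card_filter_lt_orderEmbOfFin {n : ℕ} {s : Finset (Fin n)} {k : ℕ} (h : s.card = k)
    (c : Fin k) : (s.filter (· < s.orderEmbOfFin h c)).card = c := by
  have himg : s.filter (· < s.orderEmbOfFin h c)
      = (Finset.univ.filter (fun t => t < c)).image (s.orderEmbOfFin h) := by
    ext x
    simp only [Finset.mem_filter, Finset.mem_image, Finset.mem_univ, true_and]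
    constructor
    · rintro ⟨hxs, hlt⟩
      have : x ∈ Set.range (s.orderEmbOfFin h) := by
        rw [Finset.range_orderEmbOfFin]; exact hxs
      obtain ⟨t, ht⟩ := this
      exact ⟨t, (s.orderEmbOfFin h).strictMono.lt_iff_lt.mp (ht ▸ hlt), ht⟩
    · rintro ⟨t, hlt, rfl⟩
      exact ⟨Finset.orderEmbOfFin_mem _ _ _, (s.orderEmbOfFin h).strictMono hlt⟩
  rw [himg, Finset.card_image_of_injective _ (s.orderEmbOfFin h).injective, filter_univ_lt]

lemma exists_orderEmbOfFin_eq {n : ℕ} {s : Finset (Fin n)} {k : ℕ} (h : s.card = k) {a : Fin n}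
    (ha : a ∈ s) : ∃ c, s.orderEmbOfFin h c = a := by
  have : a ∈ Set.range (s.orderEmbOfFin h) := by rw [Finset.range_orderEmbOfFin]; exact ha
  exact this

lemma orderEmbOfFin_congr {n : ℕ} {s t : Finset (Fin n)} (hst : s = t) {k : ℕ}
    (hs : s.card = k) (b : Fin k) : s.orderEmbOfFin hs b = t.orderEmbOfFin (hst ▸ hs) b := by
  subst hst; rfl

lemma orderEmbOfFin_erase {n : ℕ} {s : Finset (Fin n)} {m : ℕ} (h : s.card = m + 1)
    (c : Fin (m + 1)) (h' : (s.erase (s.orderEmbOfFin h c)).card = m) (b : Fin m) :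
    (s.erase (s.orderEmbOfFin h c)).orderEmbOfFin h' b = s.orderEmbOfFin h (c.succAbove b) := by
  rw [← Finset.orderEmbOfFin_unique h' (f := fun b => s.orderEmbOfFin h (c.succAbove b))
    (fun b => Finset.mem_erase.mpr ⟨(s.orderEmbOfFin h).injective.ne (Fin.succAbove_ne c b),
      Finset.orderEmbOfFin_mem _ _ _⟩)
    ((s.orderEmbOfFin h).strictMono.comp (Fin.strictMono_succAbove c))]

noncomputable section
variable {n : ℕ}

/-- Contraction with a general polynomial-coefficient vector field. -/
noncomputable def contractP (w : Fin n → MvPolynomial (Fin n) ℂ) (η : PolyForm n) : PolyForm n :=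
  fun I => ∑ j ∈ Iᶜ,
    (-1 : MvPolynomial (Fin n) ℂ) ^ ((I.filter (· < j)).card) * w j * η (insert j I)

lemma contractR_eq_contractP : (contractR : PolyForm n → PolyForm n) = contractP X := rfl

lemma contractVec_eq_contractP (v : Fin n → ℂ) :
    (contractVec v : PolyForm n → PolyForm n) = contractP (fun j => C (v j)) := rfl

lemma dwedge_apply_of_card {m : ℕ} (G : Fin m → MvPolynomial (Fin n) ℂ) {K : Finset (Fin n)}
    (h : K.card = m) :
    dwedge G K = Matrix.det (Matrix.of fun i b : Fin m =>
      pderiv (K.orderEmbOfFin h b) (G i)) := by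
  rw [dwedge, dif_pos h]
  simp only [Finset.coe_orderIsoOfFin_apply]

lemma dwedge_apply_of_ne {m : ℕ} (G : Fin m → MvPolynomial (Fin n) ℂ) {K : Finset (Fin n)}
    (h : K.card ≠ m) : dwedge G K = 0 := dif_neg h

lemma filter_lt_self_insert (j : Fin n) (I : Finset (Fin n)) :
    (insert j I).filter (· < j) = I.filter (· < j) := by
  rw [Finset.filter_insert, if_neg (lt_irrefl j)]

/-- Laplace-type expansion for the contraction of `dwedge`. -/
lemma contractP_dwedge {m : ℕ} (w : Fin n → MvPolynomial (Fin n) ℂ)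
    (G : Fin (m + 1) → MvPolynomial (Fin n) ℂ) (I : Finset (Fin n)) :
    contractP w (dwedge G) I =
      ∑ i : Fin (m + 1), (-1) ^ (i : ℕ) * (∑ j : Fin n, w j * pderiv j (G i)) *
        dwedge (fun b => G (i.succAbove b)) I := by
  by_cases hI : I.card = m
  case neg =>
    rw [contractP]
    rw [Finset.sum_eq_zero, Eq.comm, Finset.sum_eq_zero]
    · intro i _
      rw [dwedge_apply_of_ne _ hI, mul_zero]
    · intro j hj
      rw [dwedge_apply_of_ne, mul_zero]
      rw [Finset.card_insert_of_notMem (Finset.mem_compl.mp hj)]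
      omega
  case pos =>
    have hDval : ∀ i : Fin (m + 1), dwedge (fun b => G (i.succAbove b)) I =
        Matrix.det (Matrix.of fun i' b : Fin m =>
          pderiv (I.orderEmbOfFin hI b) (G (i.succAbove i'))) := fun i =>
      dwedge_apply_of_card _ hI
    have van : ∀ j ∈ I, ∑ i : Fin (m + 1), (-1 : MvPolynomial (Fin n) ℂ) ^ (i : ℕ) *
        (w j * pderiv j (G i)) * dwedge (fun b => G (i.succAbove b)) I = 0 := by
      intro j hj
      set B : Matrix (Fin (m + 1)) (Fin (m + 1)) (MvPolynomial (Fin n) ℂ) :=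
        Matrix.of (fun i t => pderiv (Fin.cases j (fun b => I.orderEmbOfFin hI b) t) (G i))
        with hB
      obtain ⟨c', hc'⟩ := exists_orderEmbOfFin_eq hI hj
      have hdup : Matrix.det B = 0 := by
        apply Matrix.det_zero_of_column_eq (Fin.succ_ne_zero c').symm
        intro k
        simp only [hB, Matrix.of_apply, Fin.cases_zero, Fin.cases_succ, hc']
      have hexp := Matrix.det_succ_column_zero B
      have hsub : ∀ i : Fin (m + 1), B.submatrix i.succAbove Fin.succ =
          Matrix.of fun i' b : Fin m => pderiv (I.orderEmbOfFin hI b) (G (i.succAbove i')) := by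
        intro i; ext i' b
        simp only [hB, Matrix.submatrix_apply, Matrix.of_apply, Fin.cases_succ]
      rw [hdup] at hexp
      have : ∀ i : Fin (m + 1), (-1 : MvPolynomial (Fin n) ℂ) ^ (i : ℕ) *
          (w j * pderiv j (G i)) * dwedge (fun b => G (i.succAbove b)) I =
          w j * ((-1) ^ (i : ℕ) * B i 0 * Matrix.det (B.submatrix i.succAbove Fin.succ)) := by
        intro i
        rw [hsub, hDval]
        simp only [hB, Matrix.of_apply, Fin.cases_zero]
        ring
      rw [Finset.sum_congr rfl (fun i _ => this i), ← Finset.mul_sum, ← hexp, mul_zero]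
    have key : ∀ j ∈ Iᶜ, (-1 : MvPolynomial (Fin n) ℂ) ^ ((I.filter (· < j)).card) * w j *
        dwedge G (insert j I) =
        ∑ i : Fin (m + 1), (-1) ^ (i : ℕ) * (w j * pderiv j (G i)) *
          dwedge (fun b => G (i.succAbove b)) I := by
      intro j hjc
      have hj : j ∉ I := Finset.mem_compl.mp hjc
      have hK : (insert j I).card = m + 1 := by
        rw [Finset.card_insert_of_notMem hj, hI]
      obtain ⟨c, hc⟩ := exists_orderEmbOfFin_eq hK (Finset.mem_insert_self j I)
      have hfilter : (I.filter (· < j)).card = (c : ℕ) := by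
        have := card_filter_lt_orderEmbOfFin hK c
        rw [hc, filter_lt_self_insert] at this
        exact this
      have hEr : (insert j I).erase ((insert j I).orderEmbOfFin hK c) = I := by
        rw [hc]; exact Finset.erase_insert hj
      have h' : ((insert j I).erase ((insert j I).orderEmbOfFin hK c)).card = m := by
        rw [hEr, hI]
      have hcols : ∀ b : Fin m, (insert j I).orderEmbOfFin hK (c.succAbove b)
          = I.orderEmbOfFin hI b := by
        intro b
        rw [← orderEmbOfFin_erase hK c h' b, orderEmbOfFin_congr hEr h' b]
      set A : Matrix (Fin (m + 1)) (Fin (m + 1)) (MvPolynomial (Fin n) ℂ) :=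
        Matrix.of (fun i t => pderiv ((insert j I).orderEmbOfFin hK t) (G i)) with hA
      have hdet : dwedge G (insert j I) = Matrix.det A := dwedge_apply_of_card _ hK
      have hsub : ∀ i : Fin (m + 1), A.submatrix i.succAbove c.succAbove =
          Matrix.of fun i' b : Fin m => pderiv (I.orderEmbOfFin hI b) (G (i.succAbove i')) := by
        intro i; ext i' b
        simp only [hA, Matrix.submatrix_apply, Matrix.of_apply, hcols]
      rw [hdet, Matrix.det_succ_column A c, Finset.mul_sum]
      refine Finset.sum_congr rfl fun i _ => ?_
      rw [hsub, hDval, hfilter]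
      simp only [hA, Matrix.of_apply, hc]
      have hsign : (-1 : MvPolynomial (Fin n) ℂ) ^ (c : ℕ) * (-1) ^ ((i : ℕ) + (c : ℕ))
          = (-1) ^ (i : ℕ) := by
        rw [pow_add, ← mul_assoc, mul_comm ((-1 : MvPolynomial (Fin n) ℂ) ^ (c : ℕ)),
          mul_assoc, ← pow_add, Even.neg_one_pow ⟨(c : ℕ), rfl⟩, mul_one]
      calc (-1 : MvPolynomial (Fin n) ℂ) ^ (c : ℕ) * w j *
            ((-1) ^ ((i : ℕ) + (c : ℕ)) * pderiv j (G i) *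
              Matrix.det (Matrix.of fun i' b : Fin m =>
                pderiv (I.orderEmbOfFin hI b) (G (i.succAbove i'))))
          = ((-1 : MvPolynomial (Fin n) ℂ) ^ (c : ℕ) * (-1) ^ ((i : ℕ) + (c : ℕ))) *
            (w j * pderiv j (G i)) * Matrix.det (Matrix.of fun i' b : Fin m =>
                pderiv (I.orderEmbOfFin hI b) (G (i.succAbove i'))) := by ring
        _ = _ := by rw [hsign]
    rw [contractP]
    rw [Finset.sum_congr rfl key, Finset.sum_subset (Finset.subset_univ Iᶜ)
      (fun j _ hj => van j (by simpa using hj)), Finset.sum_comm]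
    refine Finset.sum_congr rfl fun i _ => ?_
    rw [← Finset.sum_mul, ← Finset.mul_sum]

end

noncomputable section
variable {n : ℕ}

lemma wedgeForm_one_apply (α β : PolyForm n) (K : Finset (Fin n)) :
    wedgeForm 1 α β K = ∑ a ∈ K,
      (-1 : MvPolynomial (Fin n) ℂ) ^ (((K.erase a).filter (· < a)).card)
        * α {a} * β (K.erase a) := by
  rw [wedgeForm]
  have hset : K.powerset.filter (fun I => I.card = 1) = K.image (fun a => {a}) := by
    ext I
    simp only [Finset.mem_filter, Finset.mem_powerset, Finset.mem_image, Finset.card_eq_one]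
    constructor
    · rintro ⟨hsub, a, rfl⟩
      exact ⟨a, by simpa using hsub, rfl⟩
    · rintro ⟨a, ha, rfl⟩
      exact ⟨by simpa using ha, a, rfl⟩
  rw [hset, Finset.sum_image (fun a _ b _ h => Finset.singleton_injective h)]
  refine Finset.sum_congr rfl fun a ha => ?_
  rw [Finset.sum_singleton, Finset.sdiff_singleton_eq_erase]

lemma dwedge_one_apply (g : MvPolynomial (Fin n) ℂ) (a : Fin n) :
    dwedge (fun _ : Fin 1 => g) {a} = pderiv a g := by
  rw [dwedge_apply_of_card _ (Finset.card_singleton a), Matrix.det_fin_one]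
  simp [Finset.orderEmbOfFin_singleton]

lemma dwedge_row_eq {m : ℕ} {G : Fin m → MvPolynomial (Fin n) ℂ} {i₁ i₂ : Fin m}
    (hne : i₁ ≠ i₂) (heq : G i₁ = G i₂) (K : Finset (Fin n)) : dwedge G K = 0 := by
  by_cases hK : K.card = m
  · rw [dwedge_apply_of_card _ hK]
    exact Matrix.det_zero_of_row_eq hne (by funext b; simp [heq])
  · exact dwedge_apply_of_ne _ hK

lemma dwedge_cons_self {m : ℕ} (G : Fin (m + 1) → MvPolynomial (Fin n) ℂ) (i : Fin (m + 1))
    (K : Finset (Fin n)) :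
    dwedge (Fin.cons (G i) (fun b => G (i.succAbove b))) K
      = (-1) ^ (i : ℕ) * dwedge G K := by
  have hfun : (Fin.cons (G i) (fun b => G (i.succAbove b)) : Fin (m + 1) → _)
      = fun t => G (i.cycleRange.symm t) := by
    funext t
    refine Fin.cases ?_ (fun b => ?_) t
    · simp [Fin.cycleRange_symm_zero]
    · simp [Fin.cycleRange_symm_succ]
  rw [hfun]
  by_cases hK : K.card = m + 1
  · rw [dwedge_apply_of_card _ hK, dwedge_apply_of_card _ hK]
    have hperm := Matrix.det_permute (i.cycleRange.symm)
      (Matrix.of fun t b : Fin (m + 1) => pderiv (K.orderEmbOfFin hK b) (G t))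
    have hmat : (Matrix.of fun t b : Fin (m + 1) =>
        pderiv (K.orderEmbOfFin hK b) (G (i.cycleRange.symm t)))
      = (Matrix.of fun t b : Fin (m + 1) =>
        pderiv (K.orderEmbOfFin hK b) (G t)).submatrix (i.cycleRange.symm) id := rfl
    rw [hmat, hperm, Equiv.Perm.sign_symm, Fin.sign_cycleRange]
    norm_num
  · rw [dwedge_apply_of_ne _ hK, dwedge_apply_of_ne _ hK, mul_zero]

/-- Row-Laplace: wedging `dg` onto `dwedge G` gives `dwedge (Fin.cons g G)`. -/
lemma wedge_d1_dwedge {m : ℕ} (g : MvPolynomial (Fin n) ℂ) (G : Fin m → MvPolynomial (Fin n) ℂ)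
    (K : Finset (Fin n)) :
    wedgeForm 1 (dwedge (fun _ : Fin 1 => g)) (dwedge G) K = dwedge (Fin.cons g G) K := by
  by_cases hK : K.card = m + 1
  case neg =>
    rw [wedgeForm_one_apply, dwedge_apply_of_ne _ hK, Finset.sum_eq_zero]
    intro a ha
    have hcard : (K.erase a).card ≠ m := by
      have h1 : 1 ≤ K.card := Finset.card_pos.mpr ⟨a, ha⟩
      rw [Finset.card_erase_of_mem ha]
      omega
    rw [dwedge_apply_of_ne _ hcard, mul_zero]
  case pos =>
    rw [wedgeForm_one_apply, dwedge_apply_of_card _ hK, Matrix.det_succ_row_zero]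
    refine (Finset.sum_bij (fun t _ => K.orderEmbOfFin hK t) ?_ ?_ ?_ ?_).symm
    · intro t _; exact Finset.orderEmbOfFin_mem _ _ _
    · intro t _ t' _ h; exact (K.orderEmbOfFin hK).injective h
    · intro a ha
      obtain ⟨t, ht⟩ := exists_orderEmbOfFin_eq hK ha
      exact ⟨t, Finset.mem_univ t, ht⟩
    · intro t _
      set a := K.orderEmbOfFin hK t with hadef
      have ha : a ∈ K := Finset.orderEmbOfFin_mem _ _ _
      have h' : (K.erase a).card = m := by
        rw [Finset.card_erase_of_mem ha, hK]
        omega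
      have hsign : ((K.erase a).filter (· < a)).card = (t : ℕ) := by
        rw [Finset.filter_erase, Finset.erase_eq_of_notMem (by simp),
          hadef, card_filter_lt_orderEmbOfFin hK t]
      have hdet : dwedge G (K.erase a) = Matrix.det ((Matrix.of fun i b : Fin (m + 1) =>
          pderiv (K.orderEmbOfFin hK b) ((Fin.cons g G : Fin (m + 1) → MvPolynomial (Fin n) ℂ) i)).submatrix Fin.succ t.succAbove) := by
        rw [dwedge_apply_of_card _ h']
        congr 1
        ext i' b
        rw [Matrix.submatrix_apply, Matrix.of_apply, Matrix.of_apply, Fin.cons_succ,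
          orderEmbOfFin_erase hK t h' b]
      rw [hsign, hdet]
      simp only [Matrix.of_apply, Fin.cons_zero, hadef]
      rw [dwedge_one_apply]

noncomputable section
variable {n : ℕ}

lemma euler_monomial (s : Fin n →₀ ℕ) (c : ℂ) (j : Fin n) :
    X j * pderiv j (monomial s c) = (s j) • monomial s c := by
  rw [pderiv_monomial]
  by_cases h0 : s j = 0
  · rw [h0]
    simp
  · rw [X, monomial_mul, one_mul, smul_monomial]
    have hle : Finsupp.single j 1 ≤ s :=
      Finsupp.single_le_iff.mpr (Nat.one_le_iff_ne_zero.mpr h0)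
    rw [add_tsub_cancel_of_le hle]
    congr 1
    rw [nsmul_eq_mul]
    ring

lemma euler {k : ℕ} {φ : MvPolynomial (Fin n) ℂ} (h : φ.IsHomogeneous k) :
    ∑ j : Fin n, X j * pderiv j φ = (k : MvPolynomial (Fin n) ℂ) * φ := by
  have key : ∀ s ∈ φ.support, ∑ j : Fin n, X j * pderiv j (monomial s (coeff s φ))
      = k • monomial s (coeff s φ) := by
    intro s hs
    have hks : ∑ j : Fin n, s j = k := by
      have hw := h (mem_support_iff.mp hs)
      rw [Finsupp.weight_apply] at hw
      rw [← hw, Finsupp.sum_fintype _ _ (fun i => rfl)]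
      simp
    calc ∑ j : Fin n, X j * pderiv j (monomial s (coeff s φ))
        = ∑ j : Fin n, (s j) • monomial s (coeff s φ) := by
          exact Finset.sum_congr rfl fun j _ => euler_monomial s (coeff s φ) j
      _ = (∑ j : Fin n, s j) • monomial s (coeff s φ) := by rw [Finset.sum_smul]
      _ = _ := by rw [hks]
  calc ∑ j : Fin n, X j * pderiv j φ
      = ∑ j : Fin n, ∑ s ∈ φ.support, X j * pderiv j (monomial s (coeff s φ)) := by
        refine Finset.sum_congr rfl fun j _ => ?_
        conv_lhs => rw [φ.as_sum]
        rw [map_sum, Finset.mul_sum]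
    _ = ∑ s ∈ φ.support, ∑ j : Fin n, X j * pderiv j (monomial s (coeff s φ)) :=
        Finset.sum_comm
    _ = ∑ s ∈ φ.support, k • monomial s (coeff s φ) := Finset.sum_congr rfl key
    _ = k • φ := by rw [← Finset.smul_sum, ← φ.as_sum]
    _ = (k : MvPolynomial (Fin n) ℂ) * φ := by rw [nsmul_eq_mul]

noncomputable section
variable {n : ℕ}

lemma sum_erase_comm {M : Type*} [AddCommGroup M] (s : Finset (Fin n)) (f : Fin n → Fin n → M) :
    ∑ j ∈ s, ∑ k ∈ s.erase j, f j k = ∑ k ∈ s, ∑ j ∈ s.erase k, f j k := by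
  have h : ∀ (g : Fin n → Fin n → M), ∑ j ∈ s, ∑ k ∈ s.erase j, g j k
      = (∑ j ∈ s, ∑ k ∈ s, g j k) - ∑ j ∈ s, g j j := by
    intro g
    rw [← Finset.sum_sub_distrib]
    exact Finset.sum_congr rfl fun j hj => Finset.sum_erase_eq_sub hj
  rw [h f, h (fun k j => f j k), Finset.sum_comm]

lemma card_filter_lt_insert {I : Finset (Fin n)} {j : Fin n} (hj : j ∉ I) (k : Fin n) :
    ((insert j I).filter (· < k)).card
      = (I.filter (· < k)).card + if j < k then 1 else 0 := by
  rw [Finset.filter_insert]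
  split_ifs with h
  · rw [Finset.card_insert_of_notMem (fun hmem => hj (Finset.mem_of_mem_filter _ hmem))]
  · rw [add_zero]

lemma contractP_anticomm (w w' : Fin n → MvPolynomial (Fin n) ℂ) (η : PolyForm n)
    (I : Finset (Fin n)) :
    contractP w (contractP w' η) I = - contractP w' (contractP w η) I := by
  have key : ∀ (u u' : Fin n → MvPolynomial (Fin n) ℂ),
      contractP u (contractP u' η) I = ∑ j ∈ Iᶜ, ∑ k ∈ Iᶜ.erase j,
        (-1 : MvPolynomial (Fin n) ℂ) ^ ((I.filter (· < j)).card)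
          * u j * ((-1) ^ (((insert j I).filter (· < k)).card) * u' k
          * η (insert k (insert j I))) := by
    intro u u'
    rw [contractP]
    refine Finset.sum_congr rfl fun j hj => ?_
    show _ * _ * contractP u' η (insert j I) = _
    rw [contractP, Finset.compl_insert, Finset.mul_sum]
  rw [key w w', key w' w]
  conv_rhs => rw [sum_erase_comm]
  rw [← Finset.sum_neg_distrib]
  refine Finset.sum_congr rfl fun j hj => ?_
  rw [← Finset.sum_neg_distrib]
  refine Finset.sum_congr rfl fun k hk => ?_
  have hjI : j ∉ I := Finset.mem_compl.mp hj
  obtain ⟨hkj, hkc⟩ := Finset.mem_erase.mp hk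
  have hkI : k ∉ I := Finset.mem_compl.mp hkc
  rw [card_filter_lt_insert hjI k, card_filter_lt_insert hkI j, Finset.insert_comm]
  rcases hkj.lt_or_gt with hlt | hlt
  · rw [if_pos hlt, if_neg (asymm hlt), add_zero, pow_add, pow_one]
    ring
  · rw [if_neg (asymm hlt), if_pos hlt, add_zero, pow_add, pow_one]
    ring

lemma contractR_contractR (η : PolyForm n) : contractR (contractR η) = 0 := by
  funext I
  have h := contractP_anticomm X X η I
  rw [← contractR_eq_contractP] at h
  have h2 : (2 : ℂ) • contractR (contractR η) I = 0 := by
    rw [two_smul]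
    nth_rewrite 1 [h]
    rw [neg_add_cancel]
  calc contractR (contractR η) I = (2 : ℂ)⁻¹ • ((2 : ℂ) • contractR (contractR η) I) := by
        rw [smul_smul, inv_mul_cancel₀ two_ne_zero, one_smul]
    _ = (0 : PolyForm n) I := by rw [h2, smul_zero]; simp

lemma contractVec_zero (v : Fin n → ℂ) : contractVec v (0 : PolyForm n) = 0 := by
  funext I
  rw [contractVec]
  simp

lemma contractR_foldr_zero (vs : List (Fin n → ℂ)) (γ : PolyForm n)
    (h : contractR γ = 0) : contractR (vs.foldr contractVec γ) = 0 := by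
  induction vs with
  | nil => exact h
  | cons v vs ih =>
    show contractR (contractVec v (vs.foldr contractVec γ)) = 0
    funext I
    have h1 := contractP_anticomm X (fun j => C (v j)) (vs.foldr contractVec γ) I
    rw [← contractR_eq_contractP, ← contractVec_eq_contractP] at h1
    rw [h1, ih, contractVec_zero]
    simp

noncomputable section
variable {n : ℕ}

lemma contractP_smul (w : Fin n → MvPolynomial (Fin n) ℂ) (p : MvPolynomial (Fin n) ℂ)
    (γ : PolyForm n) : contractP w (p • γ) = p • contractP w γ := by
  funext I
  show contractP w (p • γ) I = p * contractP w γ I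
  rw [contractP, contractP, Finset.mul_sum]
  refine Finset.sum_congr rfl fun j _ => ?_
  show _ * _ * (p * γ (insert j I)) = _
  ring

lemma contractP_add (w : Fin n → MvPolynomial (Fin n) ℂ) (γ δ : PolyForm n) :
    contractP w (γ + δ) = contractP w γ + contractP w δ := by
  funext I
  show contractP w (γ + δ) I = contractP w γ I + contractP w δ I
  rw [contractP, contractP, contractP, ← Finset.sum_add_distrib]
  refine Finset.sum_congr rfl fun j _ => ?_
  show _ * _ * (γ (insert j I) + δ (insert j I)) = _
  ring

lemma contractP_zero (w : Fin n → MvPolynomial (Fin n) ℂ) :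
    contractP w (0 : PolyForm n) = 0 := by
  funext I
  rw [contractP]
  simp

lemma contractP_sum_apply {ι : Type*} (w : Fin n → MvPolynomial (Fin n) ℂ) (s : Finset ι)
    (c : ι → MvPolynomial (Fin n) ℂ) (γ : ι → PolyForm n) (I : Finset (Fin n)) :
    contractP w (fun J => ∑ x ∈ s, c x * γ x J) I
      = ∑ x ∈ s, c x * contractP w (γ x) I := by
  rw [contractP]
  simp_rw [Finset.mul_sum]
  rw [Finset.sum_comm]
  refine Finset.sum_congr rfl fun x _ => ?_
  rw [contractP, Finset.mul_sum]
  exact Finset.sum_congr rfl fun j _ => by ring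

/-- The set of `dwedge`s of `m`-subfamilies (with repetition) of `F`. -/
def spanSet {N : ℕ} (F : Fin N → MvPolynomial (Fin n) ℂ) (m : ℕ) : Set (PolyForm n) :=
  Set.range (fun S : Fin m → Fin N => dwedge (fun b => F (S b)))

lemma contractP_mem_span {N m : ℕ} (F : Fin N → MvPolynomial (Fin n) ℂ)
    (w : Fin n → MvPolynomial (Fin n) ℂ) {γ : PolyForm n}
    (hγ : γ ∈ Submodule.span (MvPolynomial (Fin n) ℂ) (spanSet F (m + 1))) :
    contractP w γ ∈ Submodule.span (MvPolynomial (Fin n) ℂ) (spanSet F m) := by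
  induction hγ using Submodule.span_induction with
  | mem x hx =>
    obtain ⟨S, rfl⟩ := hx
    have hrw : contractP w (dwedge fun b => F (S b)) = ∑ i : Fin (m + 1),
        ((-1) ^ (i : ℕ) * ∑ j : Fin n, w j * pderiv j (F (S i)))
          • (dwedge fun b => F (S (i.succAbove b))) := by
      funext I
      rw [contractP_dwedge, Finset.sum_apply]
      exact Finset.sum_congr rfl fun i _ => by rw [Pi.smul_apply, smul_eq_mul]
    rw [hrw]
    exact Submodule.sum_mem _ fun i _ => Submodule.smul_mem _ _
      (Submodule.subset_span ⟨fun b => S (i.succAbove b), rfl⟩)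
  | zero =>
    rw [contractP_zero]
    exact Submodule.zero_mem _
  | add x y hx hy ihx ihy =>
    rw [contractP_add]
    exact Submodule.add_mem _ ihx ihy
  | smul a x hx ih =>
    rw [contractP_smul]
    exact Submodule.smul_mem _ _ ih

lemma foldr_mem_span {N : ℕ} (F : Fin N → MvPolynomial (Fin n) ℂ)
    (vs : List (Fin n → ℂ)) (m : ℕ) (γ : PolyForm n)
    (hγ : γ ∈ Submodule.span (MvPolynomial (Fin n) ℂ) (spanSet F (vs.length + m))) :
    vs.foldr contractVec γ ∈ Submodule.span (MvPolynomial (Fin n) ℂ) (spanSet F m) := by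
  induction vs generalizing m with
  | nil => simpa using hγ
  | cons v vs ih =>
    show contractVec v (vs.foldr contractVec γ) ∈ _
    rw [contractVec_eq_contractP]
    refine contractP_mem_span F _ (ih (m + 1) ?_)
    have he : (v :: vs).length + m = vs.length + (m + 1) := by
      rw [List.length_cons]
      omega
    exact he ▸ hγ

lemma wedge_one_sum_left {ι : Type*} (s : Finset ι) (c : ι → MvPolynomial (Fin n) ℂ)
    (γ : ι → PolyForm n) (β : PolyForm n) (K : Finset (Fin n)) :
    wedgeForm 1 (fun J => ∑ x ∈ s, c x * γ x J) β K
      = ∑ x ∈ s, c x * wedgeForm 1 (γ x) β K := by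
  rw [wedgeForm_one_apply]
  have : ∀ a ∈ K, (-1 : MvPolynomial (Fin n) ℂ) ^ (((K.erase a).filter (· < a)).card)
      * (∑ x ∈ s, c x * γ x {a}) * β (K.erase a)
      = ∑ x ∈ s, c x * ((-1) ^ (((K.erase a).filter (· < a)).card)
          * γ x {a} * β (K.erase a)) := by
    intro a _
    rw [Finset.mul_sum, Finset.sum_mul]
    exact Finset.sum_congr rfl fun x _ => by ring
  rw [Finset.sum_congr rfl this, Finset.sum_comm]
  refine Finset.sum_congr rfl fun x _ => ?_
  rw [wedgeForm_one_apply, Finset.mul_sum]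

lemma wedge_one_sum_right {ι : Type*} (δ : PolyForm n) (s : Finset ι)
    (c : ι → MvPolynomial (Fin n) ℂ) (γ : ι → PolyForm n) (K : Finset (Fin n)) :
    wedgeForm 1 δ (fun J => ∑ x ∈ s, c x * γ x J) K
      = ∑ x ∈ s, c x * wedgeForm 1 δ (γ x) K := by
  rw [wedgeForm_one_apply]
  have : ∀ a ∈ K, (-1 : MvPolynomial (Fin n) ℂ) ^ (((K.erase a).filter (· < a)).card)
      * δ {a} * (∑ x ∈ s, c x * γ x (K.erase a))
      = ∑ x ∈ s, c x * ((-1) ^ (((K.erase a).filter (· < a)).card)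
          * δ {a} * γ x (K.erase a)) := by
    intro a _
    rw [Finset.mul_sum]
    exact Finset.sum_congr rfl fun x _ => by ring
  rw [Finset.sum_congr rfl this, Finset.sum_comm]
  refine Finset.sum_congr rfl fun x _ => ?_
  rw [wedgeForm_one_apply, Finset.mul_sum]

/-- The key identity `dFᵢ ∧ ω = dᵢ Fᵢ ⋅ (dF₀ ∧ ⋯ ∧ F_q)`. -/
lemma wedge_dFi_omega {m : ℕ} (d : Fin (m + 1) → ℕ) (F : Fin (m + 1) → MvPolynomial (Fin n) ℂ)
    (hdeg : ∀ i, (F i).IsHomogeneous (d i)) (i : Fin (m + 1)) (K : Finset (Fin n)) :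
    wedgeForm 1 (dwedge (fun _ : Fin 1 => F i)) (contractR (dwedge F)) K
      = (d i : MvPolynomial (Fin n) ℂ) * F i * dwedge F K := by
  have hexp : contractR (dwedge F) = fun I => ∑ k : Fin (m + 1),
      ((-1) ^ (k : ℕ) * ((d k : MvPolynomial (Fin n) ℂ) * F k))
        * dwedge (fun b => F (k.succAbove b)) I := by
    funext I
    rw [contractR_eq_contractP, contractP_dwedge]
    refine Finset.sum_congr rfl fun k _ => ?_
    rw [euler (hdeg k), mul_assoc]
  rw [hexp, wedge_one_sum_right]
  rw [Finset.sum_eq_single i]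
  · rw [wedge_d1_dwedge, dwedge_cons_self]
    have hsq : (-1 : MvPolynomial (Fin n) ℂ) ^ (i : ℕ) * (-1) ^ (i : ℕ) = 1 := by
      rw [← pow_add]
      exact Even.neg_one_pow ⟨(i : ℕ), rfl⟩
    calc (-1 : MvPolynomial (Fin n) ℂ) ^ (i : ℕ) * ((d i : MvPolynomial (Fin n) ℂ) * F i)
          * ((-1) ^ (i : ℕ) * dwedge F K)
        = ((-1 : MvPolynomial (Fin n) ℂ) ^ (i : ℕ) * (-1) ^ (i : ℕ))
          * ((d i : MvPolynomial (Fin n) ℂ) * F i * dwedge F K) := by ring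
      _ = _ := by rw [hsq, one_mul, mul_assoc]
  · intro k _ hki
    rw [wedge_d1_dwedge]
    have hik : i ≠ k := fun h => hki h.symm
    obtain ⟨b, hb⟩ := Fin.exists_succAbove_eq hik
    have hrow : (Fin.cons (F i) (fun b => F (k.succAbove b)) : Fin (m + 1)
        → MvPolynomial (Fin n) ℂ) 0
        = (Fin.cons (F i) (fun b => F (k.succAbove b)) : Fin (m + 1)
        → MvPolynomial (Fin n) ℂ) b.succ := by
      rw [Fin.cons_zero, Fin.cons_succ, hb]
    rw [dwedge_row_eq (Fin.succ_ne_zero b).symm hrow, mul_zero]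
  · intro h
    exact absurd (Finset.mem_univ i) h

/-- **Plücker decomposability.** For homogeneous polynomials `F₀, …, F_q` on `ℂ^{r+1}`,
the `q`-form `ω = i_R(dF₀ ∧ ⋯ ∧ dF_q)` satisfies `(i_v ω) ∧ ω = 0` for every
`v ∈ Λ^{q-1} ℂ^{r+1}` (contraction by a `(q-1)`-multivector, expressed by iterated
contraction along any list of `q-1` constant vectors). -/
theorem plucker_condition (r q : ℕ) (d : Fin (q + 1) → ℕ)
    (F : Fin (q + 1) → MvPolynomial (Fin (r + 1)) ℂ)
    (hdeg : ∀ i, (F i).IsHomogeneous (d i)) :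
    ∀ vs : List (Fin (r + 1) → ℂ), vs.length + 1 = q →
      wedgeForm 1 (vs.foldr contractVec (contractR (dwedge F))) (contractR (dwedge F)) = 0 := by
  intro vs hlen
  subst hlen
  set ω : PolyForm (r + 1) := contractR (dwedge F) with hω
  set α : PolyForm (r + 1) := vs.foldr contractVec ω with hα
  have hη : dwedge F ∈ Submodule.span (MvPolynomial (Fin (r + 1)) ℂ)
      (spanSet F (vs.length + 1 + 1)) :=
    Submodule.subset_span ⟨fun b => b, rfl⟩
  have hωspan : ω ∈ Submodule.span (MvPolynomial (Fin (r + 1)) ℂ)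
      (spanSet F (vs.length + 1)) := by
    rw [hω, contractR_eq_contractP]
    exact contractP_mem_span F X hη
  have hαspan : α ∈ Submodule.span (MvPolynomial (Fin (r + 1)) ℂ) (spanSet F 1) :=
    foldr_mem_span F vs 1 ω hωspan
  have hαspan' : α ∈ Submodule.span (MvPolynomial (Fin (r + 1)) ℂ)
      (Set.range (fun S : Fin 1 → Fin (vs.length + 1 + 1) =>
        dwedge (fun b => F (S b)))) := hαspan
  obtain ⟨c, hc⟩ := (Submodule.mem_span_range_iff_exists_fun _).mp hαspan'
  have hαsum : α = fun J => ∑ S : Fin 1 → Fin (vs.length + 1 + 1),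
      c S * dwedge (fun b => F (S b)) J := by
    rw [← hc]
    funext J
    rw [Finset.sum_apply]
    exact Finset.sum_congr rfl fun S _ => by simp
  have hzero : contractR α = 0 := contractR_foldr_zero vs ω (contractR_contractR _)
  have hone : ∀ S : Fin 1 → Fin (vs.length + 1 + 1),
      contractP X (dwedge fun b => F (S b)) ∅
        = (d (S 0) : MvPolynomial (Fin (r + 1)) ℂ) * F (S 0) := by
    intro S
    rw [contractP_dwedge (m := 0), Fin.sum_univ_one]
    have hemp : dwedge (fun b : Fin 0 => F (S ((0 : Fin 1).succAbove b))) ∅ = 1 := by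
      rw [dwedge_apply_of_card _ (Finset.card_empty)]
      exact Matrix.det_fin_zero
    rw [hemp, euler (hdeg (S 0)), mul_one]
    simp
  have hstar : ∑ S : Fin 1 → Fin (vs.length + 1 + 1),
      c S * ((d (S 0) : MvPolynomial (Fin (r + 1)) ℂ) * F (S 0)) = 0 := by
    have h0 := congrFun hzero ∅
    rw [contractR_eq_contractP, hαsum, contractP_sum_apply] at h0
    simp_rw [hone] at h0
    simpa using h0
  funext K
  rw [hαsum, wedge_one_sum_left]
  have hterm : ∀ S : Fin 1 → Fin (vs.length + 1 + 1),
      wedgeForm 1 (dwedge fun b => F (S b)) ω K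
        = (d (S 0) : MvPolynomial (Fin (r + 1)) ℂ) * F (S 0) * dwedge F K := by
    intro S
    have hfe : (fun b : Fin 1 => F (S b)) = fun _ : Fin 1 => F (S 0) := by
      funext b
      rw [Subsingleton.elim b 0]
    rw [hfe, hω]
    exact wedge_dFi_omega d F hdeg (S 0) K
  have hfinal : ∀ S ∈ (Finset.univ : Finset (Fin 1 → Fin (vs.length + 1 + 1))),
      c S * wedgeForm 1 (dwedge fun b => F (S b)) ω K
        = (c S * ((d (S 0) : MvPolynomial (Fin (r + 1)) ℂ) * F (S 0))) * dwedge F K := by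
    intro S _
    rw [hterm S]
    ring
  rw [Finset.sum_congr rfl hfinal, ← Finset.sum_mul, hstar, zero_mul]
  simp
end
end
end
end
end

section
/- For q = 1: the base locus of the rational map ρ(F_0,F_1) = i_R(dF_0 ∧ dF_1), i.e. the set of pairs of nonzero homogeneous polynomials (F_0, F_1) of degrees (d_0, d_1) with i_R(dF_0 ∧ dF_1) = 0, is exactly the set of pairs with F_0^{d_1} proportional to F_1^{d_0} (as points of the product of projective spaces: F_0^{d_1} = F_1^{d_0} up to scalar). -/
open MvPolynomial

section AuxLemmas

set_option linter.unusedSectionVars false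

variable {σ : Type*} [Fintype σ] [DecidableEq σ]


omit [Fintype σ] [DecidableEq σ] in
lemma degree_add' (u v : σ →₀ ℕ) : (u+v).degree = u.degree + v.degree := by
  simp [Finsupp.degree_eq_weight_one, map_add]

lemma coeff_pderiv (j : σ) (f : MvPolynomial σ ℂ) (m : σ →₀ ℕ) :
    coeff m (pderiv j f) = (m j + 1 : ℂ) * coeff (m + Finsupp.single j 1) f := by
  induction f using MvPolynomial.induction_on' with
  | monomial s a =>
    rw [pderiv_monomial, coeff_monomial, coeff_monomial]
    by_cases hs : s j = 0
    · have h1 : s - Finsupp.single j 1 = s := by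
        ext k; rcases eq_or_ne k j with rfl | hk
        · simp [hs]
        · simp [Finsupp.single_eq_of_ne' (Ne.symm hk)]
      have h2 : s ≠ m + Finsupp.single j 1 := by
        intro h; apply absurd hs; rw [h]; simp
      rw [h1, if_neg h2]
      split_ifs with h
      · subst h; simp [hs]
      · simp
    · have : s - Finsupp.single j 1 = m ↔ s = m + Finsupp.single j 1 := by
        constructor
        · intro h
          rw [← h]
          ext k; rcases eq_or_ne k j with rfl | hk
          · simp [Nat.sub_add_cancel (Nat.one_le_iff_ne_zero.2 hs)]
          · simp [Finsupp.single_eq_of_ne' (Ne.symm hk)]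
        · intro h
          rw [h]
          ext k; rcases eq_or_ne k j with rfl | hk
          · simp
          · simp [Finsupp.single_eq_of_ne' (Ne.symm hk)]
      by_cases h : s = m + Finsupp.single j 1
      · rw [if_pos (this.2 h), if_pos h]
        have hsj : s j = m j + 1 := by rw [h]; simp
        rw [hsj]; push_cast; ring
      · rw [if_neg (fun hh => h (this.1 hh)), if_neg h, mul_zero]
  | add p q hp hq => simp [hp, hq, mul_add]

set_option linter.unusedSectionVars false

lemma degree_single' (j : σ) : (Finsupp.single j 1).degree = 1 := by
  exact Finsupp.degree_single j 1

lemma degree_eq_sum (s : σ →₀ ℕ) : s.degree = s.sum fun _ e => e := rfl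

lemma totalDegree_eq_sup_degree (f : MvPolynomial σ ℂ) :
    f.totalDegree = f.support.sup Finsupp.degree := rfl

lemma totalDegree_pderiv_lt (j : σ) (f : MvPolynomial σ ℂ) (h : pderiv j f ≠ 0) :
    (pderiv j f).totalDegree < f.totalDegree := by
  have hmem : ∀ m ∈ (pderiv j f).support, m.degree < f.totalDegree := by
    intro m hm
    rw [MvPolynomial.mem_support_iff, _root_.coeff_pderiv] at hm
    have h2 : coeff (m + Finsupp.single j 1) f ≠ 0 := by
      intro h0; rw [h0, mul_zero] at hm; exact hm rfl
    have := MvPolynomial.le_totalDegree (MvPolynomial.mem_support_iff.2 h2)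
    rw [← degree_eq_sum, degree_add'] at this
    rw [degree_single'] at this
    omega
  obtain ⟨m, hm, hms⟩ := Finset.exists_mem_eq_sup _
    (MvPolynomial.support_nonempty.2 h) Finsupp.degree
  rw [totalDegree_eq_sup_degree, hms]
  exact hmem m hm

lemma exists_pderiv_ne_zero (f : MvPolynomial σ ℂ) (h : 0 < f.totalDegree) :
    ∃ j, pderiv j f ≠ 0 := by
  have hne : f ≠ 0 := by rintro rfl; simp at h
  obtain ⟨m, hm, hms⟩ := Finset.exists_mem_eq_sup _ (MvPolynomial.support_nonempty.2 hne)
    Finsupp.degree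
  have hdeg : 0 < m.degree := by rw [totalDegree_eq_sup_degree, hms] at h; exact h
  have : ∃ j, m j ≠ 0 := by
    by_contra hc
    push_neg at hc
    have : m = 0 := Finsupp.ext fun k => hc k
    rw [this] at hdeg; simp at hdeg
  obtain ⟨j, hj⟩ := this
  refine ⟨j, fun h0 => ?_⟩
  have : coeff (m - Finsupp.single j 1) (pderiv j f) = 0 := by rw [h0]; simp
  rw [_root_.coeff_pderiv] at this
  have hms' : m - Finsupp.single j 1 + Finsupp.single j 1 = m := by
    ext k; rcases eq_or_ne k j with rfl | hk
    · simp [Nat.sub_add_cancel (Nat.one_le_iff_ne_zero.2 hj)]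
    · simp [Finsupp.single_eq_of_ne' (Ne.symm hk)]
  rw [hms'] at this
  rcases mul_eq_zero.1 this with h1 | h2
  · exact Nat.cast_add_one_ne_zero _ h1
  · exact (MvPolynomial.mem_support_iff.1 hm) h2

lemma homogeneousComponent_top_ne_zero (f : MvPolynomial σ ℂ) (hf : f ≠ 0) :
    homogeneousComponent f.totalDegree f ≠ 0 := by
  obtain ⟨m, hm, hms⟩ := Finset.exists_mem_eq_sup _ (MvPolynomial.support_nonempty.2 hf)
    Finsupp.degree
  intro h0
  have := coeff_homogeneousComponent f.totalDegree f m
  rw [h0] at this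
  simp only [MvPolynomial.coeff_zero] at this
  rw [if_pos (by rw [totalDegree_eq_sup_degree, hms])] at this
  exact (MvPolynomial.mem_support_iff.1 hm) this.symm

lemma homogeneousComponent_top_mul (a b : MvPolynomial σ ℂ) :
    homogeneousComponent (a.totalDegree + b.totalDegree) (a * b) =
      homogeneousComponent a.totalDegree a * homogeneousComponent b.totalDegree b := by
  ext d
  rw [coeff_homogeneousComponent, MvPolynomial.coeff_mul, MvPolynomial.coeff_mul]
  have key : ∀ p ∈ Finset.HasAntidiagonal.antidiagonal d,
      coeff p.1 (homogeneousComponent a.totalDegree a) *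
        coeff p.2 (homogeneousComponent b.totalDegree b) =
      if d.degree = a.totalDegree + b.totalDegree then coeff p.1 a * coeff p.2 b else 0 := by
    intro p hp
    rw [Finset.HasAntidiagonal.mem_antidiagonal] at hp
    rw [coeff_homogeneousComponent, coeff_homogeneousComponent]
    by_cases h1 : p.1.degree = a.totalDegree
    · by_cases h2 : p.2.degree = b.totalDegree
      · rw [if_pos h1, if_pos h2, if_pos (by rw [← hp, degree_add', h1, h2])]
      · rw [if_pos h1, if_neg h2, mul_zero]
        -- show RHS is 0
        by_cases hd : d.degree = a.totalDegree + b.totalDegree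
        · rw [if_pos hd]
          -- p.2.degree ≠ b.totalDegree; if > then coeff p.2 b = 0; if < then p.1.degree > tot a, contra h1
          have hdd : p.1.degree + p.2.degree = d.degree := by rw [← hp, degree_add']
          have hlt : b.totalDegree < p.2.degree := by omega
          rw [MvPolynomial.coeff_eq_zero_of_totalDegree_lt hlt, mul_zero]
        · rw [if_neg hd]
    · rw [if_neg h1, zero_mul]
      by_cases hd : d.degree = a.totalDegree + b.totalDegree
      · rw [if_pos hd]
        have hdd : p.1.degree + p.2.degree = d.degree := by rw [← hp, degree_add']
        by_cases hlt : a.totalDegree < p.1.degree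
        · rw [MvPolynomial.coeff_eq_zero_of_totalDegree_lt hlt, zero_mul]
        · have hlt2 : b.totalDegree < p.2.degree := by omega
          rw [MvPolynomial.coeff_eq_zero_of_totalDegree_lt hlt2, mul_zero]
      · rw [if_neg hd]
  rw [Finset.sum_congr rfl key]
  by_cases hd : d.degree = a.totalDegree + b.totalDegree
  · simp [hd]
  · simp [hd]

lemma totalDegree_le_of_dvd {a c : MvPolynomial σ ℂ} (h : a ∣ c) (hc : c ≠ 0) :
    a.totalDegree ≤ c.totalDegree := by
  obtain ⟨b, rfl⟩ := h
  have ha : a ≠ 0 := fun h0 => hc (by rw [h0, zero_mul])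
  have hb : b ≠ 0 := fun h0 => hc (by rw [h0, mul_zero])
  have h1 : homogeneousComponent (a.totalDegree + b.totalDegree) (a * b) ≠ 0 := by
    rw [homogeneousComponent_top_mul]
    exact mul_ne_zero (homogeneousComponent_top_ne_zero a ha)
      (homogeneousComponent_top_ne_zero b hb)
  have h2 : a.totalDegree + b.totalDegree ≤ (a * b).totalDegree := by
    by_contra hlt
    exact h1 (homogeneousComponent_eq_zero _ _ (by omega))
  omega

lemma eq_C_of_totalDegree_eq_zero {g : MvPolynomial σ ℂ} (h : g.totalDegree = 0) :
    g = C (coeff 0 g) := by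
  rw [MvPolynomial.totalDegree_eq_zero_iff] at h
  ext m
  rcases eq_or_ne m 0 with rfl | hm
  · simp
  · rw [MvPolynomial.coeff_C, if_neg (Ne.symm hm)]
    by_contra hc
    exact hm (Finsupp.ext fun x => h m (MvPolynomial.mem_support_iff.2 hc) x)

lemma wronskian_prop {G H : MvPolynomial σ ℂ} (hG : G ≠ 0) (hH : H ≠ 0)
    (hrel : ∀ j, H * pderiv j G = G * pderiv j H) :
    ∃ c : ℂ, c ≠ 0 ∧ G = C c * H := by
  letI : GCDMonoid (MvPolynomial σ ℂ) := UniqueFactorizationMonoid.toGCDMonoid _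
  obtain ⟨g, hg⟩ := gcd_dvd_left G H
  obtain ⟨h, hh⟩ := gcd_dvd_right G H
  set u := gcd G H with hu
  have hu0 : u ≠ 0 := fun h0 => hG (by rw [hg, h0, zero_mul])
  have hg0 : g ≠ 0 := fun h0 => hG (by rw [hg, h0, mul_zero])
  have hh0 : h ≠ 0 := fun h0 => hH (by rw [hh, h0, mul_zero])
  have hcop : IsRelPrime g h := by
    intro d hdg hdh
    have h1 : u * d ∣ u := dvd_gcd (by rw [hg]; exact mul_dvd_mul_left u hdg)
      (by rw [hh]; exact mul_dvd_mul_left u hdh)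
    have h2 : u * d ∣ u * 1 := by rwa [mul_one]
    exact isUnit_of_dvd_one ((mul_dvd_mul_iff_left hu0).1 h2)
  have hrel' : ∀ j, h * pderiv j g = g * pderiv j h := by
    intro j
    have h1 := hrel j
    rw [hg, hh, pderiv_mul, pderiv_mul] at h1
    have h2 : (u * u) * (h * pderiv j g) = (u * u) * (g * pderiv j h) := by
      linear_combination h1
    exact mul_left_cancel₀ (mul_ne_zero hu0 hu0) h2
  have hdvdg : ∀ j, g ∣ pderiv j g := by
    intro j
    exact hcop.dvd_of_dvd_mul_left ⟨pderiv j h, hrel' j⟩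
  have hdvdh : ∀ j, h ∣ pderiv j h := by
    intro j
    exact hcop.symm.dvd_of_dvd_mul_left ⟨pderiv j g, (hrel' j).symm⟩
  have hdegg : g.totalDegree = 0 := by
    by_contra hc
    obtain ⟨j, hj⟩ := exists_pderiv_ne_zero g (Nat.pos_of_ne_zero hc)
    exact absurd (totalDegree_le_of_dvd (hdvdg j) hj)
      (not_le.2 (totalDegree_pderiv_lt j g hj))
  have hdegh : h.totalDegree = 0 := by
    by_contra hc
    obtain ⟨j, hj⟩ := exists_pderiv_ne_zero h (Nat.pos_of_ne_zero hc)
    exact absurd (totalDegree_le_of_dvd (hdvdh j) hj)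
      (not_le.2 (totalDegree_pderiv_lt j h hj))
  set a := coeff 0 g with ha
  set b := coeff 0 h with hb
  have hga : g = C a := eq_C_of_totalDegree_eq_zero hdegg
  have hhb : h = C b := eq_C_of_totalDegree_eq_zero hdegh
  have ha0 : a ≠ 0 := fun h0 => hg0 (by rw [hga, h0, map_zero])
  have hb0 : b ≠ 0 := fun h0 => hh0 (by rw [hhb, h0, map_zero])
  refine ⟨a * b⁻¹, mul_ne_zero ha0 (inv_ne_zero hb0), ?_⟩
  rw [hg, hh, hga, hhb]
  rw [map_mul]
  have hcb : (C b⁻¹ : MvPolynomial σ ℂ) * C b = 1 := by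
    rw [← map_mul, inv_mul_cancel₀ hb0, C_1]
  linear_combination (-(C a * u) : MvPolynomial σ ℂ) * hcb

lemma euler_identity {d : ℕ} {F : MvPolynomial σ ℂ} (hF : F.IsHomogeneous d) :
    ∑ j, X j * pderiv j F = (d : MvPolynomial σ ℂ) * F := by
  have hmono : ∀ (j : σ) (s : σ →₀ ℕ) (a : ℂ),
      X j * pderiv j (monomial s a) = monomial s (a * s j) := by
    intro j s a
    rw [pderiv_monomial]
    by_cases hs : s j = 0
    · simp [hs]
    · have hsum : Finsupp.single j 1 + (s - Finsupp.single j 1) = s := by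
        ext k; rcases eq_or_ne k j with rfl | hk
        · simp; omega
        · simp [Finsupp.single_eq_of_ne' (Ne.symm hk)]
      rw [X, monomial_mul, one_mul, hsum]
  have key : ∀ j, X j * pderiv j F = ∑ s ∈ F.support, monomial s (coeff s F * s j) := by
    intro j
    conv_lhs => rw [as_sum F]
    rw [map_sum, Finset.mul_sum]
    exact Finset.sum_congr rfl fun s _ => hmono j s _
  rw [Finset.sum_congr rfl fun j _ => key j, Finset.sum_comm]
  have step2 : ∀ s ∈ F.support, ∑ j, monomial s (coeff s F * s j)
      = monomial s (coeff s F * d) := by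
    intro s hs
    rw [← map_sum (monomial s), ← Finset.mul_sum]
    congr 2
    have h1 : ∑ j : σ, ((s j : ℂ)) = ((∑ j : σ, s j : ℕ) : ℂ) := by push_cast; rfl
    rw [h1]
    have h2 : ∑ j : σ, s j = s.degree := by
      rw [Finsupp.degree]
      exact (Finset.sum_subset (Finset.subset_univ _)
        (fun x _ hx => Finsupp.notMem_support_iff.1 hx)).symm
    rw [h2]
    have h3 := hF (MvPolynomial.mem_support_iff.1 hs)
    rw [Pi.one_def, ← Finsupp.degree_eq_weight_one] at h3
    rw [h3]
  rw [Finset.sum_congr rfl step2]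
  conv_rhs => rw [as_sum F]
  rw [Finset.mul_sum]
  refine Finset.sum_congr rfl fun s _ => ?_
  rw [show ((d : ℕ) : MvPolynomial σ ℂ) = C (d : ℂ) by push_cast; rfl, C_mul_monomial]
  congr 1
  ring


variable {n : ℕ}


lemma pair_card {i j : Fin n} (hij : i ≠ j) : ({i,j} : Finset (Fin n)).card = 2 := by
  rw [Finset.card_insert_of_notMem (by simp [hij]), Finset.card_singleton]

lemma dwedge_pair (F₀ F₁ : MvPolynomial (Fin n) ℂ) {i j : Fin n} (hij : i < j) :
    dwedge ![F₀, F₁] {i,j} =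
      pderiv i F₀ * pderiv j F₁ - pderiv j F₀ * pderiv i F₁ := by
  have hcard : ({i,j} : Finset (Fin n)).card = 2 := pair_card hij.ne
  have hiso : ∀ k : Fin 2, (({i,j} : Finset (Fin n)).orderIsoOfFin hcard k : Fin n)
      = ![i,j] k := by
    have := Finset.orderEmbOfFin_unique (f := ![i,j]) hcard
      (by intro k; fin_cases k <;> simp)
      (by intro a b hab
          have ha : a = 0 := Fin.ext (by omega)
          have hb : b = 1 := Fin.ext (by omega)
          subst ha; subst hb
          simpa using hij)
    intro k
    rw [Finset.coe_orderIsoOfFin_apply, ← this]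
  simp only [dwedge, dif_pos hcard]
  rw [Matrix.det_fin_two]
  simp only [Matrix.of_apply, hiso]
  simp [Matrix.cons_val_zero, Matrix.cons_val_one]

lemma contractR_dwedge_card_ne (F₀ F₁ : MvPolynomial (Fin n) ℂ) (I : Finset (Fin n))
    (hI : I.card ≠ 1) : contractR (dwedge ![F₀, F₁]) I = 0 := by
  rw [contractR]
  refine Finset.sum_eq_zero fun j hj => ?_
  have hcard : (insert j I).card = I.card + 1 :=
    Finset.card_insert_of_notMem (Finset.mem_compl.1 hj)
  rw [dwedge]
  rw [dif_neg (by omega)]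
  ring

lemma contractR_dwedge_singleton (F₀ F₁ : MvPolynomial (Fin n) ℂ) (i : Fin n) :
    contractR (dwedge ![F₀, F₁]) {i}
      = (∑ j, X j * pderiv j F₀) * pderiv i F₁
        - pderiv i F₀ * (∑ j, X j * pderiv j F₁) := by
  have hterm : ∀ j ∈ ({i} : Finset (Fin n))ᶜ,
      (-1 : MvPolynomial (Fin n) ℂ) ^ ((({i} : Finset (Fin n)).filter (· < j)).card) * X j *
        dwedge ![F₀,F₁] (insert j {i})
      = X j * (pderiv j F₀ * pderiv i F₁ - pderiv i F₀ * pderiv j F₁) := by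
    intro j hj
    have hji : j ≠ i := by simpa using hj
    rcases hji.lt_or_gt with hlt | hlt
    · have hins : insert j ({i} : Finset (Fin n)) = {j, i} := rfl
      rw [hins, dwedge_pair F₀ F₁ hlt]
      have hfil : ({i} : Finset (Fin n)).filter (· < j) = ∅ := by
        rw [Finset.filter_singleton, if_neg (by simpa using not_lt.2 hlt.le)]
      rw [hfil]
      simp
    · have hins : insert j ({i} : Finset (Fin n)) = {i, j} := by
        rw [show insert j ({i} : Finset (Fin n)) = {j, i} from rfl, Finset.pair_comm]
      rw [hins, dwedge_pair F₀ F₁ hlt]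
      have hfil : ({i} : Finset (Fin n)).filter (· < j) = {i} := by
        rw [Finset.filter_singleton, if_pos (by simpa using hlt)]
      rw [hfil]
      simp only [Finset.card_singleton, pow_one]
      ring
  rw [contractR, Finset.sum_congr rfl hterm]
  have hext : ∑ j ∈ (({i} : Finset (Fin n)))ᶜ,
      X j * (pderiv j F₀ * pderiv i F₁ - pderiv i F₀ * pderiv j F₁)
      = ∑ j, X j * (pderiv j F₀ * pderiv i F₁ - pderiv i F₀ * pderiv j F₁) := by
    apply Finset.sum_subset (Finset.subset_univ _)
    intro x _ hx
    have hxi : x = i := by simpa using hx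
    subst hxi; ring
  rw [hext, Finset.sum_mul, Finset.mul_sum, ← Finset.sum_sub_distrib]
  exact Finset.sum_congr rfl fun j _ => by ring


end AuxLemmas

/-- **Base locus for `q = 1`**: for nonzero homogeneous polynomials `F₀, F₁` of degrees
`d₀, d₁ > 0` on `ℂ^{r+1}`, one has `i_R(dF₀ ∧ dF₁) = 0` if and only if `F₀^{d₁}` is
proportional to `F₁^{d₀}` by a nonzero scalar. -/
theorem base_locus_pencil (r d₀ d₁ : ℕ) (hd₀ : 0 < d₀) (hd₁ : 0 < d₁)
    (F₀ F₁ : MvPolynomial (Fin (r + 1)) ℂ)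
    (h₀ : F₀.IsHomogeneous d₀) (h₁ : F₁.IsHomogeneous d₁)
    (hF₀ : F₀ ≠ 0) (hF₁ : F₁ ≠ 0) :
    contractR (dwedge ![F₀, F₁]) = 0 ↔ ∃ c : ℂ, c ≠ 0 ∧ F₀ ^ d₁ = C c * F₁ ^ d₀ := by
  obtain ⟨e₀, rfl⟩ : ∃ e, d₀ = e + 1 := ⟨d₀ - 1, by omega⟩
  obtain ⟨e₁, rfl⟩ : ∃ e, d₁ = e + 1 := ⟨d₁ - 1, by omega⟩
  have e0 := euler_identity h₀
  have e1 := euler_identity h₁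
  have hiff : contractR (dwedge ![F₀, F₁]) = 0 ↔
      ∀ i, ((e₀ + 1 : ℕ) : MvPolynomial (Fin (r+1)) ℂ) * F₀ * pderiv i F₁
        = ((e₁ + 1 : ℕ) : MvPolynomial (Fin (r+1)) ℂ) * F₁ * pderiv i F₀ := by
    constructor
    · intro h i
      have hh := congrFun h {i}
      rw [contractR_dwedge_singleton, e0, e1] at hh
      simp only [Pi.zero_apply] at hh
      linear_combination hh
    · intro h
      funext I
      by_cases hc : I.card = 1
      · obtain ⟨i, rfl⟩ := Finset.card_eq_one.1 hc
        rw [contractR_dwedge_singleton, e0, e1]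
        simp only [Pi.zero_apply]
        linear_combination h i
      · rw [contractR_dwedge_card_ne F₀ F₁ I hc]
        simp
  rw [hiff]
  constructor
  · intro h
    have hrel : ∀ j, F₁ ^ (e₀+1) * pderiv j (F₀ ^ (e₁+1))
        = F₀ ^ (e₁+1) * pderiv j (F₁ ^ (e₀+1)) := by
      intro j
      rw [pderiv_pow, pderiv_pow]
      simp only [Nat.add_sub_cancel]
      linear_combination (-(F₀ ^ e₁ * F₁ ^ e₀) : MvPolynomial (Fin (r+1)) ℂ) * h j
    exact wronskian_prop (pow_ne_zero _ hF₀) (pow_ne_zero _ hF₁) hrel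
  · rintro ⟨c, hc, hcc⟩ i
    have hd := congrArg (pderiv i) hcc
    rw [pderiv_pow, pderiv_C_mul, pderiv_pow] at hd
    simp only [Nat.add_sub_cancel] at hd
    have hne : (C c * F₁ ^ (e₀+1) : MvPolynomial (Fin (r+1)) ℂ) ≠ 0 :=
      mul_ne_zero (by simpa using hc) (pow_ne_zero _ hF₁)
    apply mul_left_cancel₀ hne
    linear_combination (-(F₀ * F₁) : MvPolynomial (Fin (r+1)) ℂ) * hd
      + (((e₁+1 : ℕ) : MvPolynomial (Fin (r+1)) ℂ) * F₁ * pderiv i F₀) * hcc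
end
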